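/- arXiv:1610.07260 — 3 statements merged into one kernel-verified Lean document; each statement's English description precedes it below -/
import Mathlib

section
/- Let p be a prime with p ≡ 3 (mod 4) and let ε ∈ {1, −1}. Then the proportion #{γ ∈ SL₂(F_p) : tr(γᵀγ) = 2ε} / |SL₂(F_p)| equals 1/(p(p−1)). -/
open Matrix Finset

/-- `trF γ = tr(γᵀ γ)` for `γ` in `SL₂(R)`. -/
def trF {R : Type*} [CommRing R] (γ : Matrix.SpecialLinearGroup (Fin 2) R) : R :=
  Matrix.trace ((γ : Matrix (Fin 2) (Fin 2) R)ᵀ * (γ : Matrix (Fin 2) (Fin 2) R))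

section aux

variable {p : ℕ} [Fact p.Prime]

lemma aux_sq_add_sq_eq_zero (hp3 : p % 4 = 3) {a b : ZMod p} (h : a ^ 2 + b ^ 2 = 0) :
    a = 0 ∧ b = 0 := by
  have hns : ¬ IsSquare (-1 : ZMod p) := by
    rw [ZMod.exists_sq_eq_neg_one_iff]
    simp [hp3]
  by_cases hb : b = 0
  · subst hb
    refine ⟨?_, rfl⟩
    have h' : a ^ 2 = 0 := by simpa using h
    exact sq_eq_zero_iff.mp h'
  · exfalso
    apply hns
    refine ⟨a / b, ?_⟩
    field_simp
    linear_combination -h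

lemma aux_card_circle (hp3 : p % 4 = 3) {s : ZMod p} (hs : s ≠ 0) :
    (univ.filter (fun x : ZMod p × ZMod p => x.1 ^ 2 + x.2 ^ 2 = s)).card = p + 1 := by
  classical
  -- all nonzero fibers have the same cardinality
  have key : ∀ s t : ZMod p, s ≠ 0 → t ≠ 0 →
      (univ.filter (fun x : ZMod p × ZMod p => x.1 ^ 2 + x.2 ^ 2 = s)).card =
      (univ.filter (fun x : ZMod p × ZMod p => x.1 ^ 2 + x.2 ^ 2 = t)).card := by
    intro s t hs ht
    obtain ⟨c, d, hcd⟩ := ZMod.sq_add_sq p (t / s)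
    have hu : c ^ 2 + d ^ 2 ≠ 0 := by rw [hcd]; exact div_ne_zero ht hs
    have hcd' : s * (c ^ 2 + d ^ 2) = t := by
      rw [hcd]; field_simp
    refine Finset.card_bij' (fun x _ => (x.1 * c - x.2 * d, x.1 * d + x.2 * c))
      (fun x _ => ((x.1 * c + x.2 * d) / (c ^ 2 + d ^ 2),
        (x.2 * c - x.1 * d) / (c ^ 2 + d ^ 2))) ?_ ?_ ?_ ?_
    · rintro ⟨a, b⟩ hx
      simp only [mem_filter, mem_univ, true_and] at hx ⊢
      linear_combination (c ^ 2 + d ^ 2) * hx + hcd'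
    · rintro ⟨a, b⟩ hx
      simp only [mem_filter, mem_univ, true_and] at hx ⊢
      field_simp
      linear_combination (c ^ 2 + d ^ 2) * hx - (c ^ 2 + d ^ 2) * hcd'
    · rintro ⟨a, b⟩ hx
      simp only [Prod.mk.injEq]
      constructor <;> field_simp <;> ring
    · rintro ⟨a, b⟩ hx
      simp only [Prod.mk.injEq]
      constructor <;> field_simp <;> ring
  have hsum : ∑ s : ZMod p,
      (univ.filter (fun x : ZMod p × ZMod p => x.1 ^ 2 + x.2 ^ 2 = s)).card = p ^ 2 := by
    rw [← Finset.card_eq_sum_card_fiberwise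
      (f := fun x : ZMod p × ZMod p => x.1 ^ 2 + x.2 ^ 2) (t := univ) (fun x _ => mem_univ _)]
    simp [card_univ, ZMod.card, sq]
  have hfib0 : (univ.filter (fun x : ZMod p × ZMod p => x.1 ^ 2 + x.2 ^ 2 = (0 : ZMod p))).card
      = 1 := by
    rw [Finset.card_eq_one]
    refine ⟨(0, 0), ?_⟩
    ext ⟨a, b⟩
    simp only [mem_filter, mem_univ, true_and, mem_singleton, Prod.mk.injEq]
    constructor
    · intro h; exact aux_sq_add_sq_eq_zero hp3 h
    · rintro ⟨rfl, rfl⟩; ring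
  have h1 : (1 : ZMod p) ≠ 0 := one_ne_zero
  set N := (univ.filter (fun x : ZMod p × ZMod p => x.1 ^ 2 + x.2 ^ 2 = (1 : ZMod p))).card with hN
  rw [key s 1 hs h1]
  -- now compute N
  have hsplit : ∑ s : ZMod p,
      (univ.filter (fun x : ZMod p × ZMod p => x.1 ^ 2 + x.2 ^ 2 = s)).card
      = 1 + (p - 1) * N := by
    rw [← Finset.add_sum_erase _ _ (mem_univ (0 : ZMod p)), hfib0]
    congr 1
    rw [Finset.sum_congr rfl (fun t htmem => key t 1 (Finset.ne_of_mem_erase htmem) h1),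
      Finset.sum_const, smul_eq_mul]
    congr 1
    rw [Finset.card_erase_of_mem (mem_univ _), card_univ, ZMod.card]
  rw [hsplit] at hsum
  have hp2 : 2 ≤ p := (Fact.out : p.Prime).two_le
  obtain ⟨q, rfl⟩ : ∃ q, p = q + 1 := ⟨p - 1, by omega⟩
  have hq : q + 1 - 1 = q := by omega
  rw [hq] at hsum
  have hq1 : 1 ≤ q := by omega
  have : q * N = q * (q + 2) := by nlinarith [hsum]
  have := Nat.eq_of_mul_eq_mul_left (by omega) this
  omega

lemma aux_card_line (a b : ZMod p) (hab : ¬(a = 0 ∧ b = 0)) :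
    (univ.filter (fun A : Matrix (Fin 2) (Fin 2) (ZMod p) =>
      A.det = 1 ∧ A 0 0 = a ∧ A 0 1 = b)).card = p := by
  classical
  have hcZ : (univ : Finset (ZMod p)).card = p := by simp [ZMod.card]
  refine Eq.trans ?_ hcZ
  by_cases ha : a = 0
  · have hb : b ≠ 0 := fun hb => hab ⟨ha, hb⟩
    subst ha
    refine Finset.card_bij' (fun A _ => A 1 1) (fun t _ => !![0, b; -b⁻¹, t]) ?_ ?_ ?_ ?_
    · intro A hA; exact mem_univ _
    · intro t ht
      simp only [mem_filter, mem_univ, true_and, Matrix.det_fin_two_of]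
      refine ⟨by field_simp; ring, by simp, by simp⟩
    · intro A hA
      simp only [mem_filter, mem_univ, true_and, Matrix.det_fin_two] at hA
      obtain ⟨hdet, h00, h01⟩ := hA
      rw [h00, h01] at hdet
      have h10 : A 1 0 = -b⁻¹ := by field_simp; linear_combination -hdet
      conv_rhs => rw [Matrix.eta_fin_two A]
      rw [h00, h01, h10]
    · intro t ht; simp
  · refine Finset.card_bij' (fun A _ => A 1 0)
      (fun t _ => !![a, b; t, (1 + b * t) * a⁻¹]) ?_ ?_ ?_ ?_
    · intro A hA; exact mem_univ _
    · intro t ht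
      simp only [mem_filter, mem_univ, true_and, Matrix.det_fin_two_of]
      refine ⟨by field_simp; ring, by simp, by simp⟩
    · intro A hA
      simp only [mem_filter, mem_univ, true_and, Matrix.det_fin_two] at hA
      obtain ⟨hdet, h00, h01⟩ := hA
      rw [h00, h01] at hdet
      have h11 : A 1 1 = (1 + b * A 1 0) * a⁻¹ := by field_simp; linear_combination hdet
      conv_rhs => rw [Matrix.eta_fin_two A]
      rw [h00, h01, h11]
    · intro t ht; simp

lemma aux_card_SL2 : Nat.card (Matrix.SpecialLinearGroup (Fin 2) (ZMod p)) = (p ^ 2 - 1) * p := by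
  classical
  have e : Matrix.SpecialLinearGroup (Fin 2) (ZMod p) ≃
      {A : Matrix (Fin 2) (Fin 2) (ZMod p) // A.det = 1} :=
    ⟨fun γ => ⟨γ.1, γ.2⟩, fun x => ⟨x.1, x.2⟩, fun _ => rfl, fun _ => rfl⟩
  rw [Nat.card_congr e, Nat.card_eq_fintype_card, Fintype.card_subtype]
  rw [Finset.card_eq_sum_card_fiberwise
    (f := fun A : Matrix (Fin 2) (Fin 2) (ZMod p) => (A 0 0, A 0 1)) (t := univ)
    (fun x _ => mem_univ _)]
  have hfib : ∀ r : ZMod p × ZMod p,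
      ((univ.filter (fun A : Matrix (Fin 2) (Fin 2) (ZMod p) => A.det = 1)).filter
        (fun A => (A 0 0, A 0 1) = r)).card
      = if r = (0, 0) then 0 else p := by
    rintro ⟨a, b⟩
    rw [Finset.filter_filter]
    split_ifs with h
    · rw [Prod.mk.injEq] at h
      obtain ⟨rfl, rfl⟩ := h
      rw [Finset.card_eq_zero, Finset.filter_eq_empty_iff]
      rintro A -
      rintro ⟨hdet, hr⟩
      rw [Prod.mk.injEq] at hr
      rw [Matrix.det_fin_two, hr.1, hr.2] at hdet
      simp at hdet
    · refine Eq.trans ?_ (aux_card_line a b (by simpa [Prod.ext_iff] using h))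
      congr 1
      ext A
      simp [Prod.ext_iff, and_assoc]
  rw [Finset.sum_congr rfl (fun r _ => hfib r)]
  rw [← Finset.add_sum_erase _ _ (mem_univ ((0 : ZMod p), (0 : ZMod p)))]
  rw [if_pos rfl, zero_add]
  rw [Finset.sum_congr rfl (fun r hr => if_neg (Finset.ne_of_mem_erase hr))]
  rw [Finset.sum_const, smul_eq_mul, Finset.card_erase_of_mem (mem_univ _), card_univ]
  simp [Fintype.card_prod, ZMod.card, sq]

lemma aux_trF_eq (γ : Matrix.SpecialLinearGroup (Fin 2) (ZMod p)) :
    trF γ = (γ.1 0 0) ^ 2 + (γ.1 0 1) ^ 2 + (γ.1 1 0) ^ 2 + (γ.1 1 1) ^ 2 := by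
  simp [trF, Matrix.trace_fin_two, Matrix.mul_apply, Fin.sum_univ_two, sq]
  ring

end aux

theorem stmt_5 (p : ℕ) (hp : p.Prime) (hp3 : p % 4 = 3) [Fact p.Prime]
    (ε : ZMod p) (hε : ε = 1 ∨ ε = -1) :
    ((Nat.card {γ : Matrix.SpecialLinearGroup (Fin 2) (ZMod p) // trF γ = 2 * ε} : ℚ)
      / (Nat.card (Matrix.SpecialLinearGroup (Fin 2) (ZMod p)) : ℚ)
      = 1 / (p * (p - 1))) := by
  have hppos : 3 ≤ p := by
    have := hp.two_le
    omega
  have hε2 : ε ^ 2 = 1 := by rcases hε with rfl | rfl <;> ring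
  have hε0 : ε ≠ 0 := by
    rcases hε with rfl | rfl
    · exact one_ne_zero
    · simp
  have key : ∀ γ : Matrix.SpecialLinearGroup (Fin 2) (ZMod p), trF γ = 2 * ε →
      γ.1 1 1 = ε * γ.1 0 0 ∧ γ.1 1 0 = -(ε * γ.1 0 1) ∧
        (γ.1 0 0) ^ 2 + (γ.1 0 1) ^ 2 = ε := by
    intro γ ht
    have hdet : γ.1 0 0 * γ.1 1 1 - γ.1 0 1 * γ.1 1 0 = 1 := by
      have h2 := γ.2
      rwa [Matrix.det_fin_two] at h2
    rw [aux_trF_eq] at ht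
    have h0 : (γ.1 0 0 - ε * γ.1 1 1) ^ 2 + (γ.1 0 1 + ε * γ.1 1 0) ^ 2 = 0 := by
      linear_combination ht - 2 * ε * hdet + ((γ.1 1 0) ^ 2 + (γ.1 1 1) ^ 2) * hε2
    obtain ⟨h1, h2⟩ := aux_sq_add_sq_eq_zero hp3 h0
    have e1 : γ.1 1 1 = ε * γ.1 0 0 := by
      linear_combination -ε * h1 - γ.1 1 1 * hε2
    have e2 : γ.1 1 0 = -(ε * γ.1 0 1) := by
      linear_combination ε * h2 - γ.1 1 0 * hε2
    refine ⟨e1, e2, ?_⟩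
    linear_combination ε * hdet - ε * γ.1 0 0 * e1 + ε * γ.1 0 1 * e2
      - ((γ.1 0 0) ^ 2 + (γ.1 0 1) ^ 2) * hε2
  have hfiber : Nat.card {γ : Matrix.SpecialLinearGroup (Fin 2) (ZMod p) // trF γ = 2 * ε}
      = p + 1 := by
    have e : {γ : Matrix.SpecialLinearGroup (Fin 2) (ZMod p) // trF γ = 2 * ε} ≃
        {x : ZMod p × ZMod p // x.1 ^ 2 + x.2 ^ 2 = ε} := by
      refine ⟨fun γ => ⟨(γ.1.1 0 0, γ.1.1 0 1), (key γ.1 γ.2).2.2⟩,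
        fun x => ⟨⟨!![x.1.1, x.1.2; -(ε * x.1.2), ε * x.1.1], ?_⟩, ?_⟩, ?_, ?_⟩
      · rw [Matrix.det_fin_two_of]
        linear_combination ε * x.2 + hε2
      · refine (aux_trF_eq _).trans ?_
        have hx := x.2
        simp only [Matrix.cons_val', Matrix.cons_val_zero, Matrix.cons_val_one, Matrix.head_cons,
          Matrix.empty_val', Matrix.cons_val_fin_one, Matrix.head_fin_const, Matrix.of_apply]
        linear_combination (1 + ε ^ 2) * hx + ε * hε2
      · rintro ⟨γ, hγ⟩
        obtain ⟨e1', e2', _⟩ := key γ hγ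
        apply Subtype.ext
        apply Subtype.ext
        show !![γ.1 0 0, γ.1 0 1; -(ε * γ.1 0 1), ε * γ.1 0 0] = γ.1
        conv_rhs => rw [Matrix.eta_fin_two γ.1]
        rw [e1', e2']
      · rintro ⟨⟨a, b⟩, hx⟩
        apply Subtype.ext
        simp
    rw [Nat.card_congr e, Nat.card_eq_fintype_card, Fintype.card_subtype,
      aux_card_circle hp3 hε0]
  rw [hfiber, aux_card_SL2]
  have h1 : (3 : ℚ) ≤ (p : ℚ) := by exact_mod_cast hppos
  have hsq : 1 ≤ p ^ 2 := by nlinarith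
  have hcast : (((p ^ 2 - 1) * p : ℕ) : ℚ) = ((p : ℚ) ^ 2 - 1) * p := by
    push_cast [Nat.cast_sub hsq]
    ring
  rw [hcast]
  have hp0 : (p : ℚ) ≠ 0 := by linarith
  have hpm : (p : ℚ) - 1 ≠ 0 := by
    intro h
    nlinarith [h]
  have hsq0 : (p : ℚ) ^ 2 - 1 ≠ 0 := by nlinarith
  field_simp
  push_cast
  ring
end

section
/- For any odd prime p and any ε ∈ {1,−1}, the count #{γ ∈ SL₂(F_p) : tr(γᵀγ) = 2ε} is independent of the choice of sign ε. -/
open Matrix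

lemma card_trF_neg (p : ℕ) [Fact p.Prime] (c : ZMod p) :
    Nat.card {γ : Matrix.SpecialLinearGroup (Fin 2) (ZMod p) // trF γ = c}
      = Nat.card {γ : Matrix.SpecialLinearGroup (Fin 2) (ZMod p) // trF γ = -c} := by
  obtain ⟨x, y, hxy⟩ := ZMod.sq_add_sq p (-1)
  have hdet : (!![x, y; y, -x] : Matrix (Fin 2) (Fin 2) (ZMod p)).det = 1 := by
    simp [Matrix.det_fin_two_of]
    linear_combination -hxy
  set A : Matrix.SpecialLinearGroup (Fin 2) (ZMod p) := ⟨_, hdet⟩ with hA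
  have key : ∀ γ : Matrix.SpecialLinearGroup (Fin 2) (ZMod p), trF (A * γ) = - trF γ := by
    intro γ
    have h00 : (γ : Matrix (Fin 2) (Fin 2) (ZMod p)) 0 0 = γ.1 0 0 := rfl
    simp only [trF, Matrix.SpecialLinearGroup.coe_mul]
    rw [hA]
    simp [Matrix.trace_fin_two, Matrix.mul_apply, Fin.sum_univ_two, Matrix.transpose_apply,
      Matrix.vecMul, dotProduct, Matrix.vecHead, Matrix.vecTail]
    linear_combination ((γ.1 0 0)^2 + (γ.1 0 1)^2 + (γ.1 1 0)^2 + (γ.1 1 1)^2) * hxy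
  refine Nat.card_congr ((Equiv.mulLeft A).subtypeEquiv fun γ => ?_)
  simp only [Equiv.coe_mulLeft, key]
  constructor
  · rintro rfl; rfl
  · intro h; exact neg_injective h

theorem stmt_6 (p : ℕ) (hp : p.Prime) (hodd : p % 2 = 1) [Fact p.Prime]
    (ε ε' : ZMod p) (hε : ε = 1 ∨ ε = -1) (hε' : ε' = 1 ∨ ε' = -1) :
    Nat.card {γ : Matrix.SpecialLinearGroup (Fin 2) (ZMod p) // trF γ = 2 * ε}
      = Nat.card {γ : Matrix.SpecialLinearGroup (Fin 2) (ZMod p) // trF γ = 2 * ε'} := by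
  rcases hε with rfl | rfl <;> rcases hε' with rfl | rfl
  · rfl
  · have h : (2 : ZMod p) * (-1) = -(2 * 1) := by ring
    rw [h]; exact card_trF_neg p (2 * 1)
  · have h : (2 : ZMod p) * 1 = -(2 * (-1)) := by ring
    rw [h]; exact card_trF_neg p (2 * (-1))
  · rfl
end

section
/- The number of integer solutions (x,y,z,w) ∈ ℤ⁴ to the simultaneous equations x² − y² + z² − w² = 1 and 2(x² + y² + z² + w²) = t is O(t^ε) for every ε > 0. -/
open GaussianInt Zsqrtd UniqueFactorizationMonoid

local notation "ℤIP" => GaussianInt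

noncomputable instance : NormalizationMonoid GaussianInt :=
  (UniqueFactorizationMonoid.normalizationMonoid : StrongNormalizationMonoid GaussianInt).toNormalizationMonoid

lemma unit_mem_Icc (u : GaussianIntˣ) :
    ((u : GaussianInt).re, (u : GaussianInt).im)
      ∈ Finset.Icc (-1 : ℤ) 1 ×ˢ Finset.Icc (-1 : ℤ) 1 := by
  have h1 : (u : GaussianInt).norm = 1 := (Zsqrtd.norm_eq_one_iff' (by norm_num) _).mpr u.isUnit
  rw [Zsqrtd.norm_def] at h1
  simp only [Finset.mem_product, Finset.mem_Icc]
  refine ⟨⟨?_, ?_⟩, ?_, ?_⟩ <;>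
    nlinarith [sq_nonneg ((u : GaussianInt).re), sq_nonneg ((u : GaussianInt).im),
      sq_nonneg ((u : GaussianInt).re + (u : GaussianInt).im),
      sq_nonneg ((u : GaussianInt).re - (u : GaussianInt).im)]

instance : Finite GaussianIntˣ := by
  apply Finite.of_injective
    (fun u : GaussianIntˣ =>
      (⟨_, unit_mem_Icc u⟩ : ↥(Finset.Icc (-1 : ℤ) 1 ×ˢ Finset.Icc (-1 : ℤ) 1)))
  intro u v huv
  simp only [Subtype.mk.injEq, Prod.mk.injEq] at huv
  exact Units.ext (Zsqrtd.ext huv.1 huv.2)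

noncomputable instance : Fintype GaussianIntˣ := Fintype.ofFinite _

noncomputable def instFinDvd (z : GaussianInt) (h : z ≠ 0) :
    Fintype {δ : GaussianInt // δ ∣ z} :=
  UniqueFactorizationMonoid.fintypeSubtypeDvd z h

lemma natAbs_norm_two_le {π : GaussianInt} (hπ : Prime π) : 2 ≤ π.norm.natAbs := by
  have h0 : π.norm.natAbs ≠ 0 := by
    simp only [ne_eq, Int.natAbs_eq_zero, GaussianInt.norm_eq_zero]
    exact hπ.ne_zero
  have h1 : π.norm.natAbs ≠ 1 := fun h => hπ.not_unit (Zsqrtd.norm_eq_one_iff.mp h)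
  omega

lemma dvd_natAbs_norm (π : GaussianInt) : π ∣ ((π.norm.natAbs : ℕ) : GaussianInt) := by
  refine ⟨star π, ?_⟩
  have h1 : ((π.norm : ℤ) : GaussianInt) = π * star π := Zsqrtd.norm_eq_mul_conj π
  rw [← h1]
  push_cast [GaussianInt.natCast_natAbs_norm]
  rfl

lemma exists_rat_prime_dvd {π : GaussianInt} (hπ : Prime π) {m : ℕ} (hm : 2 ≤ m)
    (hdvd : π ∣ (m : GaussianInt)) : ∃ q : ℕ, q.Prime ∧ π ∣ (q : GaussianInt) := by
  induction m using Nat.strong_induction_on with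
  | _ m ih =>
    have hm0 : m ≠ 0 := by omega
    have hq : m.minFac.Prime := Nat.minFac_prime (by omega)
    have hsplit : (m : GaussianInt) = (m.minFac : GaussianInt) * ((m / m.minFac : ℕ) : GaussianInt) := by
      rw [← Nat.cast_mul, Nat.mul_div_cancel' (Nat.minFac_dvd m)]
    rw [hsplit] at hdvd
    rcases hπ.2.2 _ _ hdvd with h | h
    · exact ⟨m.minFac, hq, h⟩
    · have hlt : m / m.minFac < m := Nat.div_lt_self (by omega) hq.one_lt
      have hpos : 0 < m / m.minFac := Nat.div_pos (Nat.minFac_le (by omega)) hq.pos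
      rcases Nat.lt_or_ge (m / m.minFac) 2 with h2 | h2
      · have h1 : m / m.minFac = 1 := by omega
        rw [h1] at h
        exact absurd (isUnit_of_dvd_one (by simpa using h)) hπ.not_unit
      · exact ih (m / m.minFac) hlt h2 h

lemma norm_natAbs_dvd_of_dvd {a b : GaussianInt} (h : a ∣ b) :
    a.norm.natAbs ∣ b.norm.natAbs := by
  obtain ⟨c, rfl⟩ := h
  rw [Zsqrtd.norm_mul, Int.natAbs_mul]
  exact dvd_mul_right _ _

lemma minFac_norm_eq {π : GaussianInt} (hπ : Prime π) {q : ℕ} (hq : q.Prime)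
    (h : π ∣ (q : GaussianInt)) : π.norm.natAbs.minFac = q := by
  have hm2 : 2 ≤ π.norm.natAbs := natAbs_norm_two_le hπ
  have hdvd : π.norm.natAbs ∣ q ^ 2 := by
    have h1 : π.norm.natAbs ∣ ((q : GaussianInt)).norm.natAbs := norm_natAbs_dvd_of_dvd h
    rwa [Zsqrtd.norm_natCast, Int.natAbs_mul, Int.natAbs_natCast, ← sq] at h1
  have hp : π.norm.natAbs.minFac.Prime := Nat.minFac_prime (by omega)
  have h2 : π.norm.natAbs.minFac ∣ q ^ 2 := dvd_trans (Nat.minFac_dvd _) hdvd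
  exact (Nat.prime_dvd_prime_iff_eq hp hq).mp (hp.dvd_of_dvd_pow h2)

lemma prime_fact_facts {π : GaussianInt} (hπ : Prime π) {A : ℕ} (hA : A ≠ 0)
    (hdvd : π ∣ (A : GaussianInt)) :
    π.norm.natAbs.minFac.Prime ∧ π ∣ ((π.norm.natAbs.minFac : ℕ) : GaussianInt)
      ∧ π.norm.natAbs.minFac ∣ A := by
  have hm2 : 2 ≤ π.norm.natAbs := natAbs_norm_two_le hπ
  obtain ⟨q, hq, hπq⟩ := exists_rat_prime_dvd hπ hm2 (dvd_natAbs_norm π)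
  have heq : π.norm.natAbs.minFac = q := minFac_norm_eq hπ hq hπq
  refine ⟨heq ▸ hq, heq ▸ hπq, ?_⟩
  rw [heq]
  have h1 : π.norm.natAbs ∣ A ^ 2 := by
    have := norm_natAbs_dvd_of_dvd hdvd
    rwa [Zsqrtd.norm_natCast, Int.natAbs_mul, Int.natAbs_natCast, ← sq] at this
  exact hq.dvd_of_dvd_pow (dvd_trans (heq ▸ Nat.minFac_dvd _) h1)

def natNormHom : GaussianInt →* ℕ where
  toFun x := x.norm.natAbs
  map_one' := by simp
  map_mul' a b := by show (a * b).norm.natAbs = a.norm.natAbs * b.norm.natAbs; rw [Zsqrtd.norm_mul, Int.natAbs_mul]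

lemma natNorm_unit (u : GaussianIntˣ) : natNormHom (u : GaussianInt) = 1 :=
  Zsqrtd.norm_eq_one_iff.mpr u.isUnit

lemma natNorm_assoc {a b : GaussianInt} (h : Associated a b) : natNormHom a = natNormHom b := by
  obtain ⟨u, rfl⟩ := h
  rw [map_mul, natNorm_unit, mul_one]

lemma natCast_gaussian_ne_zero {q : ℕ} (hq : q ≠ 0) : (q : GaussianInt) ≠ 0 := by
  intro h
  have h2 : ((q : GaussianInt)).re = 0 := by rw [h]; rfl
  rw [Zsqrtd.re_natCast] at h2
  exact hq (by exact_mod_cast h2)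

lemma card_normalizedFactors_prime_le_two {q : ℕ} (hq : q.Prime) :
    Multiset.card (normalizedFactors (q : GaussianInt)) ≤ 2 := by
  set G := normalizedFactors (q : GaussianInt) with hG
  have hq0 : (q : GaussianInt) ≠ 0 := natCast_gaussian_ne_zero hq.ne_zero
  have hprod : (Multiset.map (fun π => natNormHom π) G).prod = q ^ 2 := by
    rw [← MonoidHom.map_multiset_prod]
    rw [natNorm_assoc (prod_normalizedFactors hq0)]
    show ((q : GaussianInt)).norm.natAbs = q ^ 2
    rw [Zsqrtd.norm_natCast, Int.natAbs_mul, Int.natAbs_natCast, ← sq]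
  have hlow : ∀ x ∈ Multiset.map (fun π => natNormHom π) G, q ≤ x := by
    intro x hx
    obtain ⟨π, hπG, rfl⟩ := Multiset.mem_map.mp hx
    have hπ : Prime π := prime_of_normalized_factor π hπG
    have hdvd : natNormHom π ∣ q ^ 2 := by
      have h1 := norm_natAbs_dvd_of_dvd (dvd_of_mem_normalizedFactors hπG)
      rwa [Zsqrtd.norm_natCast, Int.natAbs_mul, Int.natAbs_natCast, ← sq] at h1
    obtain ⟨i, hi, heq⟩ := (Nat.dvd_prime_pow hq).mp hdvd
    have h2 : 2 ≤ q ^ i := heq ▸ natAbs_norm_two_le hπ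
    have hi0 : i ≠ 0 := by rintro rfl; simp at h2
    rw [heq]
    calc q = q ^ 1 := (pow_one q).symm
    _ ≤ q ^ i := Nat.pow_le_pow_right hq.pos (by omega)
  have := Multiset.pow_card_le_prod hlow
  rw [hprod, Multiset.card_map] at this
  exact (Nat.pow_le_pow_iff_right hq.one_lt).mp this

lemma mem_normalizedFactors_of_prime_dvd {π : GaussianInt} (hπ : Prime π)
    (hnorm : normalize π = π) {z : GaussianInt} (hz : z ≠ 0) (hdvd : π ∣ z) :
    π ∈ normalizedFactors z := by
  obtain ⟨σ, hσ, hassoc⟩ := exists_mem_normalizedFactors_of_dvd hz hπ.irreducible hdvd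
  have h2 : normalize π = normalize σ :=
    normalize_eq_normalize_iff.mpr ⟨hassoc.dvd, hassoc.symm.dvd⟩
  rw [hnorm, normalize_normalized_factor σ hσ] at h2
  rwa [h2]

lemma units_card_le : ∀ (u : GaussianIntˣ), True := fun _ => trivial

lemma count_divisors_le (z : GaussianInt) (hz : z ≠ 0) :
    Nat.card {δ : GaussianInt // δ ∣ z}
      ≤ 9 * ∏ π ∈ (normalizedFactors z).toFinset, ((normalizedFactors z).count π + 1) := by
  classical
  set F := normalizedFactors z with hF
  -- step 1 : inject into units × submultisets
  have step1 : Nat.card {δ : GaussianInt // δ ∣ z}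
      ≤ 9 * (F.powerset.toFinset).card := by
    have hδ0 : ∀ δ : {δ : GaussianInt // δ ∣ z}, (δ : GaussianInt) ≠ 0 := by
      rintro ⟨δ, hδ⟩ rfl
      exact hz (zero_dvd_iff.mp hδ)
    have hassoc : ∀ δ : {δ : GaussianInt // δ ∣ z},
        Associated (normalizedFactors (δ : GaussianInt)).prod (δ : GaussianInt) :=
      fun δ => prod_normalizedFactors (hδ0 δ)
    set f : {δ : GaussianInt // δ ∣ z} →
        (↥(Finset.Icc (-1 : ℤ) 1 ×ˢ Finset.Icc (-1 : ℤ) 1) × ↥(F.powerset.toFinset)) :=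
      fun δ => (⟨_, unit_mem_Icc (hassoc δ).choose⟩,
        ⟨normalizedFactors (δ : GaussianInt), by
          rw [Multiset.mem_toFinset, Multiset.mem_powerset]
          exact (dvd_iff_normalizedFactors_le_normalizedFactors (hδ0 δ) hz).mp δ.2⟩) with hf
    have hinj : Function.Injective f := by
      intro δ δ' h
      have h1 : normalizedFactors (δ : GaussianInt) = normalizedFactors (δ' : GaussianInt) := by
        have := congrArg (fun p => (p.2 : Multiset GaussianInt)) h
        simpa [hf] using this
      have h2 : ((hassoc δ).choose : GaussianInt) = ((hassoc δ').choose : GaussianInt) := by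
        have hre := congrArg (fun p => (p.1 : ℤ × ℤ).1) h
        have him := congrArg (fun p => (p.1 : ℤ × ℤ).2) h
        simp only [hf] at hre him
        exact Zsqrtd.ext hre him
      have e1 := (hassoc δ).choose_spec
      have e2 := (hassoc δ').choose_spec
      apply Subtype.ext
      rw [← e1, ← e2]
      exact congrArg₂ (fun a b => a * b) (congrArg Multiset.prod h1) h2
    calc Nat.card {δ : GaussianInt // δ ∣ z}
        ≤ Nat.card (↥(Finset.Icc (-1 : ℤ) 1 ×ˢ Finset.Icc (-1 : ℤ) 1) × ↥(F.powerset.toFinset)) :=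
          Nat.card_le_card_of_injective f hinj
    _ = 9 * (F.powerset.toFinset).card := by
        have h3 : (Finset.Icc (-1 : ℤ) 1).card = 3 := by rw [Int.card_Icc]; rfl
        rw [Nat.card_prod, Nat.card_eq_fintype_card, Nat.card_eq_fintype_card,
          Fintype.card_coe, Fintype.card_coe, Finset.card_product, h3]
  -- step 2 : count submultisets
  have step2 : (F.powerset.toFinset).card ≤ ∏ π ∈ F.toFinset, (F.count π + 1) := by
    have := Finset.card_le_card_of_injOn
      (f := fun (M : Multiset GaussianInt) => (fun π (_ : π ∈ F.toFinset) => M.count π))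
      (s := F.powerset.toFinset)
      (t := F.toFinset.pi (fun π => Finset.range (F.count π + 1))) ?maps ?inj
    · rwa [Finset.card_pi, Finset.prod_congr rfl (fun π _ => Finset.card_range _)] at this
    · intro M hM
      rw [Finset.mem_coe, Multiset.mem_toFinset, Multiset.mem_powerset] at hM
      rw [Finset.mem_coe, Finset.mem_pi]
      intro π _
      rw [Finset.mem_range, Nat.lt_succ_iff]
      exact Multiset.count_le_of_le π hM
    · intro M hM M' hM' hMM'
      rw [Finset.mem_coe, Multiset.mem_toFinset, Multiset.mem_powerset] at hM hM'
      ext a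
      by_cases ha : a ∈ F.toFinset
      · exact congrFun (congrFun hMM' a) ha
      · rw [Multiset.mem_toFinset] at ha
        have h0 : F.count a = 0 := Multiset.count_eq_zero.mpr ha
        have hMa : M.count a = 0 := by
          have := Multiset.count_le_of_le a hM
          omega
        have hM'a : M'.count a = 0 := by
          have := Multiset.count_le_of_le a hM'
          omega
        rw [hMa, hM'a]
  calc Nat.card {δ : GaussianInt // δ ∣ z} ≤ 9 * (F.powerset.toFinset).card := step1
  _ ≤ 9 * ∏ π ∈ F.toFinset, (F.count π + 1) := Nat.mul_le_mul_left 9 step2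

lemma count_le_two_mul_factorization {A : ℕ} (hA : A ≠ 0) {π : GaussianInt}
    (hπT : π ∈ (normalizedFactors (A : GaussianInt)).toFinset) :
    (normalizedFactors (A : GaussianInt)).count π + 1
      ≤ (A.factorization (π.norm.natAbs.minFac) + 1) ^ 2 := by
  have hz : (A : GaussianInt) ≠ 0 := natCast_gaussian_ne_zero hA
  rw [Multiset.mem_toFinset] at hπT
  have hπ : Prime π := prime_of_normalized_factor π hπT
  have hdvdA : π ∣ (A : GaussianInt) := dvd_of_mem_normalizedFactors hπT
  obtain ⟨hqprime, hπq, hqA⟩ := prime_fact_facts hπ hA hdvdA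
  set q := π.norm.natAbs.minFac with hq
  set c := (normalizedFactors (A : GaussianInt)).count π with hc
  -- π ^ c ∣ A
  have hpowdvd : π ^ c ∣ (A : GaussianInt) := by
    have h1 : Multiset.replicate c π ≤ normalizedFactors (A : GaussianInt) :=
      Multiset.le_count_iff_replicate_le.mp le_rfl
    have h2 : (Multiset.replicate c π).prod ∣ (normalizedFactors (A : GaussianInt)).prod :=
      Multiset.prod_dvd_prod_of_le h1
    rw [Multiset.prod_replicate] at h2
    exact h2.trans (prod_normalizedFactors hz).dvd
  -- q ^ c ∣ A ^ 2
  have hq_dvd_norm : q ∣ natNormHom π := Nat.minFac_dvd _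
  have hnorm_pow : (natNormHom π) ^ c ∣ A ^ 2 := by
    have h1 := norm_natAbs_dvd_of_dvd hpowdvd
    have h2 : (π ^ c).norm.natAbs = (natNormHom π) ^ c := map_pow natNormHom π c ▸ rfl
    rw [h2, Zsqrtd.norm_natCast, Int.natAbs_mul, Int.natAbs_natCast, ← sq] at h1
    exact h1
  have hqc : q ^ c ∣ A ^ 2 := dvd_trans (pow_dvd_pow_of_dvd hq_dvd_norm c) hnorm_pow
  have hcle : c ≤ 2 * A.factorization q := by
    have := (Nat.Prime.pow_dvd_iff_le_factorization hqprime (pow_ne_zero 2 hA)).mp hqc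
    rwa [Nat.factorization_pow, Finsupp.smul_apply, smul_eq_mul] at this
  nlinarith [A.factorization q]

lemma prod_counts_le {A : ℕ} (hA : A ≠ 0) :
    ∏ π ∈ (normalizedFactors (A : GaussianInt)).toFinset,
      ((normalizedFactors (A : GaussianInt)).count π + 1) ≤ A.divisors.card ^ 4 := by
  classical
  have hz : (A : GaussianInt) ≠ 0 := natCast_gaussian_ne_zero hA
  set F := normalizedFactors (A : GaussianInt) with hF
  set T := F.toFinset with hT
  set φ : GaussianInt → ℕ := fun π => π.norm.natAbs.minFac with hφ
  have hmaps : ∀ π ∈ T, φ π ∈ A.primeFactors := by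
    intro π hπT
    rw [Multiset.mem_toFinset] at hπT
    have hπ : Prime π := prime_of_normalized_factor π hπT
    obtain ⟨hq, _, hqA⟩ := prime_fact_facts hπ hA (dvd_of_mem_normalizedFactors hπT)
    exact Nat.mem_primeFactors.mpr ⟨hq, hqA, hA⟩
  rw [← Finset.prod_fiberwise_of_maps_to hmaps (fun π => F.count π + 1)]
  have hfiber : ∀ p ∈ A.primeFactors,
      ∏ π ∈ T.filter (fun π => φ π = p), (F.count π + 1)
        ≤ ((A.factorization p + 1) ^ 2) ^ 2 := by
    intro p hp
    have hpprime : p.Prime := Nat.prime_of_mem_primeFactors hp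
    have hcardfil : (T.filter (fun π => φ π = p)).card ≤ 2 := by
      have hsub : T.filter (fun π => φ π = p) ⊆ (normalizedFactors ((p : ℕ) : GaussianInt)).toFinset := by
        intro π hπ'
        rw [Finset.mem_filter] at hπ'
        obtain ⟨hπT, hφπ⟩ := hπ'
        rw [Multiset.mem_toFinset] at hπT ⊢
        have hπ : Prime π := prime_of_normalized_factor π hπT
        obtain ⟨_, hπq, _⟩ := prime_fact_facts hπ hA (dvd_of_mem_normalizedFactors hπT)
        rw [show (Zsqrtd.norm π).natAbs.minFac = p from hφπ] at hπq
        exact mem_normalizedFactors_of_prime_dvd hπ (normalize_normalized_factor π hπT)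
          (natCast_gaussian_ne_zero hpprime.ne_zero) hπq
      calc (T.filter (fun π => φ π = p)).card
          ≤ (normalizedFactors ((p : ℕ) : GaussianInt)).toFinset.card :=
            Finset.card_le_card hsub
      _ ≤ Multiset.card (normalizedFactors ((p : ℕ) : GaussianInt)) :=
            Multiset.toFinset_card_le _
      _ ≤ 2 := card_normalizedFactors_prime_le_two hpprime
    have hterm : ∀ π ∈ T.filter (fun π => φ π = p),
        F.count π + 1 ≤ (A.factorization p + 1) ^ 2 := by
      intro π hπ'
      rw [Finset.mem_filter] at hπ'
      have := count_le_two_mul_factorization hA (by rw [hT] at hπ'; exact hπ'.1)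
      rwa [show π.norm.natAbs.minFac = p from hπ'.2] at this
    calc ∏ π ∈ T.filter (fun π => φ π = p), (F.count π + 1)
        ≤ ((A.factorization p + 1) ^ 2) ^ (T.filter (fun π => φ π = p)).card :=
          Finset.prod_le_pow_card _ _ _ hterm
    _ ≤ ((A.factorization p + 1) ^ 2) ^ 2 :=
          Nat.pow_le_pow_right (by positivity) hcardfil
  calc ∏ p ∈ A.primeFactors, ∏ π ∈ T.filter (fun π => φ π = p), (F.count π + 1)
      ≤ ∏ p ∈ A.primeFactors, ((A.factorization p + 1) ^ 2) ^ 2 :=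
        Finset.prod_le_prod' hfiber
  _ = (∏ p ∈ A.primeFactors, (A.factorization p + 1)) ^ 4 := by
      rw [← Finset.prod_pow]
      apply Finset.prod_congr rfl
      intro p _
      ring
  _ = A.divisors.card ^ 4 := by rw [Nat.card_divisors hA]

lemma gauss_divisor_count {A : ℕ} (hA : A ≠ 0) :
    Nat.card {δ : GaussianInt // δ ∣ (A : GaussianInt)} ≤ 9 * A.divisors.card ^ 4 :=
  le_trans (count_divisors_le _ (natCast_gaussian_ne_zero hA))
    (Nat.mul_le_mul_left 9 (prod_counts_le hA))

set_option maxHeartbeats 2000000 in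
lemma structure_bound (t : ℕ) (ht : 1 ≤ t) :
    ∃ A M : ℕ, A ≠ 0 ∧ A ≤ t ∧ M ≠ 0 ∧ M ≤ t ∧
      Nat.card {v : ℤ × ℤ × ℤ × ℤ //
          v.1 ^ 2 - v.2.1 ^ 2 + v.2.2.1 ^ 2 - v.2.2.2 ^ 2 = 1 ∧
          2 * (v.1 ^ 2 + v.2.1 ^ 2 + v.2.2.1 ^ 2 + v.2.2.2 ^ 2) = (t : ℤ)}
        ≤ (9 * A.divisors.card ^ 4) * (9 * M.divisors.card ^ 4) := by
  classical
  by_cases hne : Nonempty {v : ℤ × ℤ × ℤ × ℤ //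
      v.1 ^ 2 - v.2.1 ^ 2 + v.2.2.1 ^ 2 - v.2.2.2 ^ 2 = 1 ∧
      2 * (v.1 ^ 2 + v.2.1 ^ 2 + v.2.2.1 ^ 2 + v.2.2.2 ^ 2) = (t : ℤ)}
  case neg =>
    refine ⟨1, 1, one_ne_zero, ht, one_ne_zero, ht, ?_⟩
    haveI := not_nonempty_iff.mp hne
    rw [Nat.card_of_isEmpty]
    exact Nat.zero_le _
  case pos =>
  obtain ⟨⟨⟨x₀, y₀, z₀, w₀⟩, h1₀, h2₀⟩⟩ := hne
  simp only at h1₀ h2₀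
  have ha4 : 4 * (x₀ ^ 2 + z₀ ^ 2) = (t : ℤ) + 2 := by linarith
  have hb4 : 4 * (y₀ ^ 2 + w₀ ^ 2) = (t : ℤ) - 2 := by linarith
  have hb0 : (0 : ℤ) ≤ y₀ ^ 2 + w₀ ^ 2 := by positivity
  set A : ℕ := (x₀ ^ 2 + z₀ ^ 2).toNat with hAdef
  set B : ℕ := (y₀ ^ 2 + w₀ ^ 2).toNat with hBdef
  have hAcast : (A : ℤ) = x₀ ^ 2 + z₀ ^ 2 := Int.toNat_of_nonneg (by positivity)
  have hBcast : (B : ℤ) = y₀ ^ 2 + w₀ ^ 2 := Int.toNat_of_nonneg hb0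
  have hA4 : 4 * (A : ℤ) = (t : ℤ) + 2 := by rw [hAcast]; exact ha4
  have hB4 : 4 * (B : ℤ) = (t : ℤ) - 2 := by rw [hBcast]; exact hb4
  set M : ℕ := max B 1 with hMdef
  have hA0 : A ≠ 0 := by
    intro h
    rw [h] at hA4
    simp at hA4
    omega
  have hAt : A ≤ t := by
    have h5 : (A : ℤ) ≤ (t : ℤ) := by omega
    exact_mod_cast h5
  have hBt : B ≤ t := by
    have h5 : (B : ℤ) ≤ (t : ℤ) := by omega
    exact_mod_cast h5
  have hM0 : M ≠ 0 := by omega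
  have hMt : M ≤ t := by omega
  refine ⟨A, M, hA0, hAt, hM0, hMt, ?_⟩
  haveI := instFinDvd ((A : ℕ) : GaussianInt) (natCast_gaussian_ne_zero hA0)
  haveI := instFinDvd ((M : ℕ) : GaussianInt) (natCast_gaussian_ne_zero hM0)
  have key : ∀ (x z : ℤ) (n : ℕ), x ^ 2 + z ^ 2 = (n : ℤ) →
      (⟨x, z⟩ : GaussianInt) ∣ ((n : ℕ) : GaussianInt) := by
    intro x z n hn
    refine ⟨star (⟨x, z⟩ : GaussianInt), ?_⟩
    have hnorm : (⟨x, z⟩ : GaussianInt).norm = (n : ℤ) := by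
      rw [Zsqrtd.norm_def]
      show x * x - (-1) * z * z = (n : ℤ)
      linear_combination hn
    have h6 := Zsqrtd.norm_eq_mul_conj (⟨x, z⟩ : GaussianInt)
    rw [hnorm] at h6
    exact_mod_cast h6
  have hdvd1 : ∀ v : {v : ℤ × ℤ × ℤ × ℤ //
      v.1 ^ 2 - v.2.1 ^ 2 + v.2.2.1 ^ 2 - v.2.2.2 ^ 2 = 1 ∧
      2 * (v.1 ^ 2 + v.2.1 ^ 2 + v.2.2.1 ^ 2 + v.2.2.2 ^ 2) = (t : ℤ)},
      (⟨v.val.1, v.val.2.2.1⟩ : GaussianInt) ∣ ((A : ℕ) : GaussianInt) := by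
    intro v
    apply key
    have h1 := v.prop.1
    have h2 := v.prop.2
    linarith
  have hdvd2 : ∀ v : {v : ℤ × ℤ × ℤ × ℤ //
      v.1 ^ 2 - v.2.1 ^ 2 + v.2.2.1 ^ 2 - v.2.2.2 ^ 2 = 1 ∧
      2 * (v.1 ^ 2 + v.2.1 ^ 2 + v.2.2.1 ^ 2 + v.2.2.2 ^ 2) = (t : ℤ)}, B ≠ 0 →
      (⟨v.val.2.1, v.val.2.2.2⟩ : GaussianInt) ∣ ((M : ℕ) : GaussianInt) := by
    intro v hB
    have hMB : (M : ℤ) = (B : ℤ) := by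
      have h5 : M = B := by omega
      exact_mod_cast congrArg (Nat.cast : ℕ → ℤ) h5
    apply key
    have h1 := v.prop.1
    have h2 := v.prop.2
    linarith
  have hzero : B = 0 → ∀ u : {v : ℤ × ℤ × ℤ × ℤ //
      v.1 ^ 2 - v.2.1 ^ 2 + v.2.2.1 ^ 2 - v.2.2.2 ^ 2 = 1 ∧
      2 * (v.1 ^ 2 + v.2.1 ^ 2 + v.2.2.1 ^ 2 + v.2.2.2 ^ 2) = (t : ℤ)},
      u.val.2.1 = 0 ∧ u.val.2.2.2 = 0 := by
    intro hB u
    have h1 := u.prop.1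
    have h2 := u.prop.2
    have hBz : (B : ℤ) = 0 := by exact_mod_cast congrArg (Nat.cast : ℕ → ℤ) hB
    have hsum : u.val.2.1 ^ 2 + u.val.2.2.2 ^ 2 = 0 := by linarith
    constructor <;> nlinarith [sq_nonneg u.val.2.1, sq_nonneg u.val.2.2.2]
  let f : {v : ℤ × ℤ × ℤ × ℤ //
      v.1 ^ 2 - v.2.1 ^ 2 + v.2.2.1 ^ 2 - v.2.2.2 ^ 2 = 1 ∧
      2 * (v.1 ^ 2 + v.2.1 ^ 2 + v.2.2.1 ^ 2 + v.2.2.2 ^ 2) = (t : ℤ)} →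
      ({δ : GaussianInt // δ ∣ ((A : ℕ) : GaussianInt)} ×
       {δ : GaussianInt // δ ∣ ((M : ℕ) : GaussianInt)}) := fun v =>
    (⟨_, hdvd1 v⟩, if hB : B = 0 then ⟨1, one_dvd _⟩ else ⟨_, hdvd2 v hB⟩)
  have hinj : Function.Injective f := by
    intro v v' heq
    have hfst : (⟨v.val.1, v.val.2.2.1⟩ : GaussianInt) = ⟨v'.val.1, v'.val.2.2.1⟩ :=
      congrArg (fun p => (p.1 : GaussianInt)) heq
    have hx : v.val.1 = v'.val.1 := congrArg Zsqrtd.re hfst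
    have hz : v.val.2.2.1 = v'.val.2.2.1 := congrArg Zsqrtd.im hfst
    have hyw : v.val.2.1 = v'.val.2.1 ∧ v.val.2.2.2 = v'.val.2.2.2 := by
      by_cases hB : B = 0
      · exact ⟨((hzero hB v).1).trans ((hzero hB v').1).symm,
          ((hzero hB v).2).trans ((hzero hB v').2).symm⟩
      · have hsnd : (⟨v.val.2.1, v.val.2.2.2⟩ : GaussianInt) = ⟨v'.val.2.1, v'.val.2.2.2⟩ := by
          have h7 := congrArg (fun p => (p.2 : GaussianInt)) heq
          simpa only [f, dif_neg hB] using h7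
        exact ⟨congrArg Zsqrtd.re hsnd, congrArg Zsqrtd.im hsnd⟩
    apply Subtype.ext
    exact Prod.ext hx (Prod.ext hyw.1 (Prod.ext hz hyw.2))
  calc Nat.card {v : ℤ × ℤ × ℤ × ℤ //
      v.1 ^ 2 - v.2.1 ^ 2 + v.2.2.1 ^ 2 - v.2.2.2 ^ 2 = 1 ∧
      2 * (v.1 ^ 2 + v.2.1 ^ 2 + v.2.2.1 ^ 2 + v.2.2.2 ^ 2) = (t : ℤ)}
      ≤ Nat.card ({δ : GaussianInt // δ ∣ ((A : ℕ) : GaussianInt)} ×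
        {δ : GaussianInt // δ ∣ ((M : ℕ) : GaussianInt)}) :=
        Nat.card_le_card_of_injective f hinj
  _ = Nat.card {δ : GaussianInt // δ ∣ ((A : ℕ) : GaussianInt)}
      * Nat.card {δ : GaussianInt // δ ∣ ((M : ℕ) : GaussianInt)} := Nat.card_prod _ _
  _ ≤ (9 * A.divisors.card ^ 4) * (9 * M.divisors.card ^ 4) :=
        Nat.mul_le_mul (gauss_divisor_count hA0) (gauss_divisor_count hM0)

open Finset in
lemma divisor_bound (ε : ℝ) (hε : 0 < ε) : ∃ C : ℝ, 1 ≤ C ∧ ∀ n : ℕ, 1 ≤ n →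
    ((n.divisors.card : ℝ)) ≤ C * (n : ℝ) ^ ε := by
  set K : ℝ := max 1 (1 / (ε * Real.log 2)) with hKdef
  have hK1 : 1 ≤ K := le_max_left _ _
  have hc : 0 < ε * Real.log 2 := mul_pos hε (Real.log_pos one_lt_two)
  have hKc : 1 ≤ K * (ε * Real.log 2) := by
    calc (1:ℝ) = (1 / (ε * Real.log 2)) * (ε * Real.log 2) := by field_simp
    _ ≤ K * (ε * Real.log 2) := by
        apply mul_le_mul_of_nonneg_right (le_max_right _ _) hc.le
  set P : ℕ := ⌈(2:ℝ) ^ (1/ε)⌉₊ with hPdef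
  have hPbig : ∀ p : ℕ, P ≤ p → 2 ≤ (p:ℝ) ^ ε := by
    intro p hp
    have h1 : (2:ℝ) ^ (1/ε) ≤ (p:ℝ) := le_trans (Nat.le_ceil _) (by exact_mod_cast hp)
    calc (2:ℝ) = ((2:ℝ) ^ (1/ε)) ^ ε := by
          rw [← Real.rpow_mul (by norm_num), one_div_mul_cancel hε.ne', Real.rpow_one]
    _ ≤ (p:ℝ) ^ ε := Real.rpow_le_rpow (by positivity) h1 hε.le
  refine ⟨K ^ P, one_le_pow₀ hK1, ?_⟩
  intro n hn
  have hn0 : n ≠ 0 := by omega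
  -- key per-prime bound
  have key : ∀ p ∈ n.primeFactors, ((n.factorization p + 1 : ℕ) : ℝ)
      ≤ (if p < P then K else 1) * ((p:ℝ) ^ (n.factorization p)) ^ ε := by
    intro p hp
    have hpprime : p.Prime := Nat.prime_of_mem_primeFactors hp
    have hp2 : (2:ℝ) ≤ (p:ℝ) := by exact_mod_cast hpprime.two_le
    set a : ℕ := n.factorization p with ha
    have hppos : (0:ℝ) < (p:ℝ) := by linarith
    have hbase : ((2:ℝ) ^ a) ^ ε ≤ ((p:ℝ) ^ a) ^ ε :=
      Real.rpow_le_rpow (by positivity) (pow_le_pow_left₀ (by norm_num) hp2 a) hε.le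
    by_cases hsmall : p < P
    · simp only [if_pos hsmall]
      -- (a+1) ≤ K * 2^(aε) ≤ K * (p^a)^ε
      have h2 : ((2:ℝ) ^ a) ^ ε = Real.exp ((a * ε) * Real.log 2) := by
        rw [← Real.rpow_natCast (2:ℝ) a, ← Real.rpow_mul (by norm_num),
          Real.rpow_def_of_pos (by norm_num)]
        ring_nf
      have h3 : 1 + (a * ε) * Real.log 2 ≤ ((2:ℝ) ^ a) ^ ε := by
        rw [h2]; exact (by linarith [Real.add_one_le_exp ((a * ε) * Real.log 2)])
      have h4 : ((a + 1 : ℕ) : ℝ) ≤ K * (1 + (a * ε) * Real.log 2) := by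
        push_cast
        have : K * (1 + (a * ε) * Real.log 2) = K + a * (K * (ε * Real.log 2)) := by ring
        rw [this]
        have h5 : (a:ℝ) * 1 ≤ a * (K * (ε * Real.log 2)) :=
          mul_le_mul_of_nonneg_left hKc (Nat.cast_nonneg a)
        linarith
      calc ((a + 1 : ℕ) : ℝ) ≤ K * (1 + (a * ε) * Real.log 2) := h4
      _ ≤ K * (((2:ℝ) ^ a) ^ ε) := by
          apply mul_le_mul_of_nonneg_left h3 (by linarith)
      _ ≤ K * (((p:ℝ) ^ a) ^ ε) := mul_le_mul_of_nonneg_left hbase (by linarith)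
    · simp only [if_neg hsmall, one_mul]
      have hPle : P ≤ p := le_of_not_gt hsmall
      have h2 : ((a + 1 : ℕ) : ℝ) ≤ (2:ℝ) ^ a := by
        exact_mod_cast Nat.succ_le_of_lt (Nat.lt_two_pow_self (n := a))
      have h3 : ((2:ℝ)) ^ a ≤ ((p:ℝ) ^ ε) ^ a :=
        pow_le_pow_left₀ (by norm_num) (hPbig p hPle) a
      have h4 : ((p:ℝ) ^ ε) ^ a = ((p:ℝ) ^ a) ^ ε := by
        rw [← Real.rpow_natCast ((p:ℝ) ^ ε) a, ← Real.rpow_natCast (p:ℝ) a,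
          ← Real.rpow_mul hppos.le, ← Real.rpow_mul hppos.le, mul_comm]
      linarith
  have hprodn : ∏ p ∈ n.primeFactors, (p:ℝ) ^ (n.factorization p) = (n:ℝ) := by
    have : (∏ p ∈ n.primeFactors, p ^ n.factorization p) = n := by
      rw [← Nat.prod_factorization_eq_prod_primeFactors]
      exact Nat.factorization_prod_pow_eq_self hn0
    exact_mod_cast congrArg (Nat.cast : ℕ → ℝ) this
  have hcard : ((n.divisors.card : ℕ) : ℝ)
      = ∏ p ∈ n.primeFactors, ((n.factorization p + 1 : ℕ) : ℝ) := by
    rw [Nat.card_divisors hn0]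
    push_cast
    rfl
  rw [hcard]
  calc ∏ p ∈ n.primeFactors, ((n.factorization p + 1 : ℕ) : ℝ)
      ≤ ∏ p ∈ n.primeFactors,
        ((if p < P then K else 1) * ((p:ℝ) ^ (n.factorization p)) ^ ε) := by
        apply Finset.prod_le_prod (fun p _ => by positivity) key
  _ = (∏ p ∈ n.primeFactors, (if p < P then K else 1))
      * ∏ p ∈ n.primeFactors, ((p:ℝ) ^ (n.factorization p)) ^ ε :=
        Finset.prod_mul_distrib
  _ ≤ K ^ P * (n:ℝ) ^ ε := by
      have h1 : ∏ p ∈ n.primeFactors, ((p:ℝ) ^ (n.factorization p)) ^ ε = (n:ℝ) ^ ε := by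
        rw [Real.finset_prod_rpow _ _ (fun p _ => by positivity) ε, hprodn]
      rw [h1]
      apply mul_le_mul_of_nonneg_right _ (by positivity)
      rw [Finset.prod_ite]
      simp only [Finset.prod_const, one_pow, mul_one]
      have hsub : (n.primeFactors.filter (· < P)).card ≤ P := by
        have h2 : n.primeFactors.filter (· < P) ⊆ Finset.range P := by
          intro x hx
          simp only [Finset.mem_filter] at hx
          exact Finset.mem_range.mpr hx.2
        simpa using Finset.card_le_card h2
      exact pow_le_pow_right₀ hK1 hsub

theorem stmt_17 :
    ∀ ε : ℝ, 0 < ε → ∃ C : ℝ, 0 < C ∧ ∀ t : ℕ, 1 ≤ t →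
      (Nat.card {v : ℤ × ℤ × ℤ × ℤ //
          v.1 ^ 2 - v.2.1 ^ 2 + v.2.2.1 ^ 2 - v.2.2.2 ^ 2 = 1 ∧
          2 * (v.1 ^ 2 + v.2.1 ^ 2 + v.2.2.1 ^ 2 + v.2.2.2 ^ 2) = (t : ℤ)} : ℝ)
        ≤ C * (t : ℝ) ^ ε := by
  intro ε hε
  obtain ⟨C₁, hC₁, hbound⟩ := divisor_bound (ε / 8) (by positivity)
  have hC₁0 : (0:ℝ) < C₁ := by linarith
  refine ⟨81 * C₁ ^ 8, by positivity, ?_⟩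
  intro t ht
  obtain ⟨A, M, hA0, hAt, hM0, hMt, hcard⟩ := structure_bound t ht
  have ht0 : (0:ℝ) < (t:ℝ) := by exact_mod_cast Nat.pos_of_ne_zero (by omega)
  have hAb : ((A.divisors.card : ℕ) : ℝ) ≤ C₁ * (t:ℝ) ^ (ε / 8) := by
    refine le_trans (hbound A (Nat.one_le_iff_ne_zero.mpr hA0)) ?_
    apply mul_le_mul_of_nonneg_left _ hC₁0.le
    exact Real.rpow_le_rpow (Nat.cast_nonneg A) (by exact_mod_cast hAt) (by positivity)
  have hMb : ((M.divisors.card : ℕ) : ℝ) ≤ C₁ * (t:ℝ) ^ (ε / 8) := by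
    refine le_trans (hbound M (Nat.one_le_iff_ne_zero.mpr hM0)) ?_
    apply mul_le_mul_of_nonneg_left _ hC₁0.le
    exact Real.rpow_le_rpow (Nat.cast_nonneg M) (by exact_mod_cast hMt) (by positivity)
  calc (Nat.card {v : ℤ × ℤ × ℤ × ℤ //
          v.1 ^ 2 - v.2.1 ^ 2 + v.2.2.1 ^ 2 - v.2.2.2 ^ 2 = 1 ∧
          2 * (v.1 ^ 2 + v.2.1 ^ 2 + v.2.2.1 ^ 2 + v.2.2.2 ^ 2) = (t : ℤ)} : ℝ)
      ≤ (((9 * A.divisors.card ^ 4) * (9 * M.divisors.card ^ 4) : ℕ) : ℝ) := by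
        exact_mod_cast hcard
  _ = 81 * ((A.divisors.card : ℕ) : ℝ) ^ 4 * ((M.divisors.card : ℕ) : ℝ) ^ 4 := by
        push_cast; ring
  _ ≤ 81 * (C₁ * (t:ℝ) ^ (ε / 8)) ^ 4 * (C₁ * (t:ℝ) ^ (ε / 8)) ^ 4 := by
        have h1 : (0:ℝ) ≤ ((A.divisors.card : ℕ) : ℝ) := Nat.cast_nonneg _
        have h2 : (0:ℝ) ≤ ((M.divisors.card : ℕ) : ℝ) := Nat.cast_nonneg _
        have h3 := pow_le_pow_left₀ h1 hAb 4
        have h4 := pow_le_pow_left₀ h2 hMb 4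
        have h5 : (0:ℝ) ≤ (C₁ * (t:ℝ) ^ (ε / 8)) ^ 4 := by positivity
        nlinarith [pow_nonneg h1 4, pow_nonneg h2 4]
  _ = 81 * C₁ ^ 8 * ((t:ℝ) ^ (ε / 8)) ^ (8:ℕ) := by ring
  _ = 81 * C₁ ^ 8 * (t:ℝ) ^ ε := by
        rw [← Real.rpow_natCast ((t:ℝ) ^ (ε / 8)) 8, ← Real.rpow_mul ht0.le]
        norm_num
end
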